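/- For a convex function f on a convex feasible set F, any local minimizer subject to being in F is a global minimizer; applied here: if the error probability P_{e_k} restricted to the feasible set {‖w‖₂ = 1, all Q-arguments ≥ 0} has a local minimizer, it is a global minimizer of the constrained problem. -/
import Mathlib

open MeasureTheory

/-- The Gaussian Q-function. -/
noncomputable def gaussQ (x : ℝ) : ℝ :=
  (1 / Real.sqrt (2 * Real.pi)) * ∫ u in Set.Ioi x, Real.exp (-u ^ 2 / 2)

lemma gauss_integrable : Integrable (fun u : ℝ => Real.exp (-u ^ 2 / 2)) := by
  have := integrable_exp_neg_mul_sq (b := 1/2) (by norm_num)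
  convert this using 2 with u
  ring_nf

lemma gaussQ_hasDerivAt (x : ℝ) :
    HasDerivAt gaussQ (-((1 / Real.sqrt (2 * Real.pi)) * Real.exp (-x ^ 2 / 2))) x := by
  have hint := gauss_integrable
  have hrepr : ∀ y : ℝ, gaussQ y = (1 / Real.sqrt (2 * Real.pi)) *
      ((∫ u in Set.Ioi (0:ℝ), Real.exp (-u ^ 2 / 2)) - ∫ u in (0:ℝ)..y, Real.exp (-u ^ 2 / 2)) := by
    intro y
    unfold gaussQ
    congr 1
    have h1 : (∫ u in Set.Iic y, Real.exp (-u ^ 2 / 2)) - ∫ u in Set.Iic (0:ℝ), Real.exp (-u ^ 2 / 2)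
        = ∫ u in (0:ℝ)..y, Real.exp (-u ^ 2 / 2) :=
      intervalIntegral.integral_Iic_sub_Iic hint.integrableOn hint.integrableOn
    have h2 := intervalIntegral.integral_Iic_add_Ioi (b := y)
      (f := fun u : ℝ => Real.exp (-u ^ 2 / 2)) hint.integrableOn hint.integrableOn
    have h3 := intervalIntegral.integral_Iic_add_Ioi (b := (0:ℝ))
      (f := fun u : ℝ => Real.exp (-u ^ 2 / 2)) hint.integrableOn hint.integrableOn
    linarith
  have hc : ContinuousAt (fun u : ℝ => Real.exp (-u ^ 2 / 2)) x := by fun_prop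
  have hd : HasDerivAt (fun y : ℝ => ∫ u in (0:ℝ)..y, Real.exp (-u ^ 2 / 2))
      (Real.exp (-x ^ 2 / 2)) x :=
    intervalIntegral.integral_hasDerivAt_right hint.intervalIntegrable
      hint.aestronglyMeasurable.stronglyMeasurableAtFilter hc
  have key := ((hd.const_sub (∫ u in Set.Ioi (0:ℝ), Real.exp (-u ^ 2 / 2))).const_mul
    (1 / Real.sqrt (2 * Real.pi)))
  simp only [mul_neg] at key
  have : gaussQ = fun y => (1 / Real.sqrt (2 * Real.pi)) *
      ((∫ u in Set.Ioi (0:ℝ), Real.exp (-u ^ 2 / 2)) - ∫ u in (0:ℝ)..y, Real.exp (-u ^ 2 / 2)) :=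
    funext hrepr
  rw [this]
  exact key

lemma gaussQ_deriv (x : ℝ) :
    deriv gaussQ x = -((1 / Real.sqrt (2 * Real.pi)) * Real.exp (-x ^ 2 / 2)) :=
  (gaussQ_hasDerivAt x).deriv

lemma gaussQ_antitone : Antitone gaussQ := by
  have hdiff : Differentiable ℝ gaussQ := fun x => (gaussQ_hasDerivAt x).differentiableAt
  apply antitone_of_deriv_nonpos hdiff
  intro x
  rw [gaussQ_deriv]
  have : 0 < (1 / Real.sqrt (2 * Real.pi)) * Real.exp (-x ^ 2 / 2) := by positivity
  linarith

lemma gaussQ_convexOn : ConvexOn ℝ (Set.Ici (0:ℝ)) gaussQ := by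
  have hdiff : Differentiable ℝ gaussQ := fun x => (gaussQ_hasDerivAt x).differentiableAt
  apply MonotoneOn.convexOn_of_deriv (convex_Ici 0) hdiff.continuous.continuousOn
    hdiff.differentiableOn
  intro x hx y hy hxy
  rw [interior_Ici] at hx hy
  rw [gaussQ_deriv, gaussQ_deriv]
  have hle : Real.exp (-y ^ 2 / 2) ≤ Real.exp (-x ^ 2 / 2) := by
    apply Real.exp_le_exp.mpr
    nlinarith [le_of_lt (Set.mem_Ioi.mp hx)]
  have : 0 ≤ 1 / Real.sqrt (2 * Real.pi) := by positivity
  nlinarith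

theorem mpe_localMin_is_globalMin (N K B : ℕ)
    (h : Fin N → ℂ) (H : Matrix (Fin N) (Fin K) ℂ)
    (a σz C : ℝ) (ha : 0 < a) (hσ : 0 < σz) (hC : 0 < C)
    (s : Fin B → Fin K → ℝ)
    (arg : (Fin N → ℂ) → Fin B → ℝ)
    (harg : ∀ w b, arg w b =
      ((∑ i, w i * h i) * (a : ℂ) - ∑ i, w i * ∑ j, H i j * (s b j : ℂ)).re)
    (F : Set (Fin N → ℂ))
    (hF : F = {w : Fin N → ℂ |
      Real.sqrt (∑ i, Complex.normSq (w i)) = 1 ∧ ∀ b, 0 ≤ arg w b})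
    (P : (Fin N → ℂ) → ℝ)
    (hP : ∀ w, P w = C * ∑ b : Fin B,
      gaussQ (arg w b / ((σz / Real.sqrt 2) * Real.sqrt (∑ i, Complex.normSq (w i)))))
    (w₀ : Fin N → ℂ) (hw₀ : w₀ ∈ F) (hloc : IsLocalMinOn P F w₀) :
    ∀ w ∈ F, P w₀ ≤ P w := by
  intro w hw
  -- notation
  set e : (Fin N → ℂ) → EuclideanSpace ℂ (Fin N) := fun u => (WithLp.equiv 2 (Fin N → ℂ)).symm u with he
  have hν : ∀ u : Fin N → ℂ, Real.sqrt (∑ i, Complex.normSq (u i)) = ‖e u‖ := by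
    intro u
    rw [he, EuclideanSpace.norm_eq]
    congr 1
    refine Finset.sum_congr rfl fun i _ => ?_
    rw [Complex.normSq_eq_norm_sq]
    rfl
  rw [hF] at hw hw₀
  obtain ⟨hw₀ν, hw₀arg⟩ := hw₀
  obtain ⟨hwν, hwarg⟩ := hw
  have hew : ‖e w‖ = 1 := by rw [← hν]; exact hwν
  have hew0 : ‖e w₀‖ = 1 := by rw [← hν]; exact hw₀ν
  -- linearity of arg
  have hadd : ∀ u v (b : Fin B), arg (u + v) b = arg u b + arg v b := by
    intro u v b
    simp only [harg, Pi.add_apply]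
    rw [← Complex.add_re]
    congr 1
    simp only [add_mul, Finset.sum_add_distrib]
    ring
  have hsmul : ∀ (r : ℝ) u (b : Fin B), arg (r • u) b = r * arg u b := by
    intro r u b
    simp only [harg, Pi.smul_apply]
    have hc : ((∑ i, r • u i * h i) * (a:ℂ) - ∑ i, r • u i * ∑ j, H i j * (s b j : ℂ))
        = r • ((∑ i, u i * h i) * (a:ℂ) - ∑ i, u i * ∑ j, H i j * (s b j : ℂ)) := by
      simp only [Complex.real_smul, mul_assoc, ← Finset.mul_sum]
      ring
    rw [hc, Complex.smul_re, smul_eq_mul]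
  set d : ℝ := σz / Real.sqrt 2 with hdd
  have hd : 0 < d := by
    rw [hdd]
    positivity
  -- the path
  set v : ℝ → (Fin N → ℂ) := fun α => α • w + (1 - α) • w₀ with hv
  set n : ℝ → ℝ := fun α => ‖e (v α)‖ with hn
  set g : ℝ → (Fin N → ℂ) := fun α => (n α)⁻¹ • v α with hg
  have hne : ∀ α : ℝ, e (v α) = α • e w + (1 - α) • e w₀ := by
    intro α
    simp [he, hv]
  have hveq : ∀ α b, arg (v α) b = α * arg w b + (1 - α) * arg w₀ b := by
    intro α b
    rw [hv]
    simp only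
    rw [hadd, hsmul, hsmul]
  -- estimates for α ∈ Ioc 0 (1/4)
  have key : ∀ α ∈ Set.Ioc (0:ℝ) (1/4),
      (g α ∈ F) ∧ P (g α) ≤ α * P w + (1 - α) * P w₀ := by
    intro α hα
    obtain ⟨hα0, hα4⟩ := hα
    have hnle : n α ≤ 1 := by
      rw [hn]
      simp only
      rw [hne]
      calc ‖α • e w + (1 - α) • e w₀‖ ≤ ‖α • e w‖ + ‖(1 - α) • e w₀‖ := norm_add_le _ _
        _ = |α| * ‖e w‖ + |1 - α| * ‖e w₀‖ := by
            rw [norm_smul, norm_smul, Real.norm_eq_abs, Real.norm_eq_abs]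
        _ = 1 := by
            rw [hew, hew0, abs_of_pos hα0, abs_of_pos (by linarith)]
            ring
    have hnpos : (1:ℝ)/2 ≤ n α := by
      have := norm_sub_norm_le ((1 - α) • e w₀) (-(α • e w))
      rw [sub_neg_eq_add, norm_neg] at this
      rw [norm_smul, norm_smul, hew, hew0] at this
      simp only [Real.norm_eq_abs] at this
      rw [abs_of_pos hα0, abs_of_pos (by linarith : (0:ℝ) < 1 - α)] at this
      have heq : (1 - α) • e w₀ + α • e w = e (v α) := by rw [hne]; abel
      rw [heq] at this
      rw [hn]
      simp only
      linarith
    have hn0 : n α ≠ 0 := by linarith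
    have hninv : 1 ≤ (n α)⁻¹ := by
      rw [le_inv_comm₀ (by norm_num) (by linarith)]
      simpa using hnle
    have hgν : Real.sqrt (∑ i, Complex.normSq (g α i)) = 1 := by
      rw [hν, hg]
      simp only
      have : e ((n α)⁻¹ • v α) = (n α)⁻¹ • e (v α) := by simp [he]
      rw [this, norm_smul, Real.norm_eq_abs, abs_of_pos (by positivity : (0:ℝ) < (n α)⁻¹)]
      show (n α)⁻¹ * n α = 1
      exact inv_mul_cancel₀ hn0
    have hbase : ∀ b, 0 ≤ α * arg w b + (1 - α) * arg w₀ b := by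
      intro b
      have := hwarg b
      have := hw₀arg b
      have : (0:ℝ) ≤ 1 - α := by linarith
      positivity
    have hgarg : ∀ b, arg (g α) b = (n α)⁻¹ * (α * arg w b + (1 - α) * arg w₀ b) := by
      intro b
      rw [hg]
      simp only
      rw [hsmul, hveq]
    have hgge : ∀ b, α * arg w b + (1 - α) * arg w₀ b ≤ arg (g α) b := by
      intro b
      rw [hgarg]
      nlinarith [hbase b, hninv]
    have hmem : g α ∈ F := by
      rw [hF]
      exact ⟨hgν, fun b => le_trans (hbase b) (hgge b)⟩
    refine ⟨hmem, ?_⟩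
    rw [hP, hP, hP, hgν, hwν, hw₀ν]
    have hpt : ∀ b : Fin B, gaussQ (arg (g α) b / (d * 1)) ≤
        α * gaussQ (arg w b / (d * 1)) + (1 - α) * gaussQ (arg w₀ b / (d * 1)) := by
      intro b
      rw [mul_one]
      have h1 : gaussQ (arg (g α) b / d) ≤
          gaussQ ((α * arg w b + (1 - α) * arg w₀ b) / d) := by
        apply gaussQ_antitone
        gcongr
        exact hgge b
      refine le_trans h1 ?_
      have h2 := gaussQ_convexOn.2 (Set.mem_Ici.mpr (div_nonneg (hwarg b) hd.le))
        (Set.mem_Ici.mpr (div_nonneg (hw₀arg b) hd.le)) hα0.le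
        (by linarith : (0:ℝ) ≤ 1 - α) (by ring)
      simp only [smul_eq_mul] at h2
      have heq : (α * arg w b + (1 - α) * arg w₀ b) / d
          = α * (arg w b / d) + (1 - α) * (arg w₀ b / d) := by ring
      rw [heq]
      exact h2
    calc C * ∑ b : Fin B, gaussQ (arg (g α) b / (d * 1))
        ≤ C * ∑ b : Fin B, (α * gaussQ (arg w b / (d * 1)) +
            (1 - α) * gaussQ (arg w₀ b / (d * 1))) := by
          apply mul_le_mul_of_nonneg_left (Finset.sum_le_sum fun b _ => hpt b) hC.le
      _ = α * (C * ∑ b : Fin B, gaussQ (arg w b / (d * 1))) +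
            (1 - α) * (C * ∑ b : Fin B, gaussQ (arg w₀ b / (d * 1))) := by
          rw [Finset.sum_add_distrib, ← Finset.mul_sum, ← Finset.mul_sum]
          ring
  -- continuity of the path at 0
  have hg0 : g 0 = w₀ := by
    have hv0 : v 0 = w₀ := by rw [hv]; simp
    have hn0 : n 0 = 1 := by rw [hn]; simp only; rw [hv0, ← hν, hw₀ν]
    rw [hg]
    simp only
    rw [hn0, hv0]
    simp
  have hcontn : Continuous n := by
    have : n = fun α : ℝ => ‖α • e w + (1 - α) • e w₀‖ := by
      funext α
      rw [hn]
      simp only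
      rw [hne]
    rw [this]
    fun_prop
  have hcontv : Continuous v := by
    rw [hv]
    fun_prop
  have hn0ne : n 0 ≠ 0 := by
    have hv0 : v 0 = w₀ := by rw [hv]; simp
    rw [hn]
    simp only
    rw [hv0, ← hν, hw₀ν]
    norm_num
  have hcontg : ContinuousAt g 0 := by
    rw [hg]
    exact ((hcontn.continuousAt.inv₀ hn0ne).smul hcontv.continuousAt)
  have htends : Filter.Tendsto g (nhdsWithin 0 (Set.Ioi (0:ℝ))) (nhdsWithin w₀ F) := by
    apply tendsto_nhdsWithin_of_tendsto_nhds_of_eventually_within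
    · have := hcontg.tendsto
      rw [hg0] at this
      exact this.mono_left nhdsWithin_le_nhds
    · filter_upwards [Ioc_mem_nhdsGT_of_mem (by norm_num : (0:ℝ) ∈ Set.Ico (0:ℝ) (1/4))]
        with α hα
      exact (key α hα).1
  have hev : ∀ᶠ α in nhdsWithin 0 (Set.Ioi (0:ℝ)), P w₀ ≤ P (g α) := htends.eventually hloc
  have hev2 : ∀ᶠ α in nhdsWithin 0 (Set.Ioi (0:ℝ)),
      P w₀ ≤ P (g α) ∧ α ∈ Set.Ioc (0:ℝ) (1/4) := by
    filter_upwards [hev, Ioc_mem_nhdsGT_of_mem (by norm_num : (0:ℝ) ∈ Set.Ico (0:ℝ) (1/4))]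
      with α h1 h2
    exact ⟨h1, h2⟩
  obtain ⟨α, hα1, hα2⟩ := hev2.exists
  have hle := (key α hα2).2
  have hαpos := hα2.1
  nlinarith [hα1, hle]
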